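/- Every countable ℵ₀-categorical tree (in the language with ≤, root ε, meet, and pred) has finite height: there exists n such that pred^n(x) = ε for all x. -/

import Mathlib

open FirstOrder FirstOrder.Language Cardinal

/-- The language of trees `L_t`: a constant `ε`, a unary function `pred`,
a binary function `⊓`, and a binary relation `≤`. -/
def treeLang : FirstOrder.Language where
  Functions := fun n => match n with
    | 0 => Unit
    | 1 => Unit
    | 2 => Unit
    | _ => Empty
  Relations := fun n => match n with
    | 2 => Unit
    | _ => Empty

/-- The `L_t`-structure on a tree given by root, predecessor, meet and order. -/
def treeStructure (A : Type*) (ε : A) (pred : A → A) (meet : A → A → A)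
    (le : A → A → Prop) : treeLang.Structure A where
  funMap := fun {n} f x =>
    match n, f with
    | 0, _ => ε
    | 1, _ => pred (x 0)
    | 2, _ => meet (x 0) (x 1)
    | _ + 3, f => f.elim
  RelMap := fun {n} r x =>
    match n, r with
    | 0, r => r.elim
    | 1, r => r.elim
    | 2, _ => le (x 0) (x 1)
    | _ + 3, r => r.elim

namespace TreeAuxProof

/-! ### Symbols -/

def leR : treeLang.Relations 2 := Unit.unit
def predF : treeLang.Functions 1 := Unit.unit
def epsF : treeLang.Constants := Unit.unit

instance countFun : ∀ n, Countable (treeLang.Functions n)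
  | 0 => inferInstanceAs (Countable Unit)
  | 1 => inferInstanceAs (Countable Unit)
  | 2 => inferInstanceAs (Countable Unit)
  | (_ + 3) => inferInstanceAs (Countable Empty)

instance countRel : ∀ n, Countable (treeLang.Relations n)
  | 0 => inferInstanceAs (Countable Empty)
  | 1 => inferInstanceAs (Countable Empty)
  | 2 => inferInstanceAs (Countable Unit)
  | (_ + 3) => inferInstanceAs (Countable Empty)

/-! ### Generic order lemmas -/

section order

variable {A : Type*} {le : A → A → Prop} {ε : A} {pred : A → A}

theorem iter_le (hrefl : ∀ a, le a a) (htrans : ∀ a b c, le a b → le b c → le a c)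
    (hple : ∀ a, le (pred a) a) : ∀ (k : ℕ) (x : A), le (pred^[k] x) x := by
  intro k
  induction k with
  | zero => intro x; exact hrefl x
  | succ k ih =>
    intro x
    rw [Function.iterate_succ_apply']
    exact htrans _ _ _ (hple _) (ih x)

theorem chain_inj (hrefl : ∀ a, le a a) (hantisymm : ∀ a b, le a b → le b a → a = b)
    (htrans : ∀ a b c, le a b → le b c → le a c)
    (hple : ∀ a, le (pred a) a) (hpne : ∀ a, a ≠ ε → pred a ≠ a)
    {b : A} (hb : ∀ n, pred^[n] b ≠ ε) :
    Function.Injective fun n => pred^[n] b := by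
  have key : ∀ m n, m < n → pred^[n] b ≠ pred^[m] b := by
    intro m n hmn heq
    obtain ⟨k, rfl⟩ := Nat.exists_eq_add_of_le (Nat.succ_le_of_lt hmn)
    have hs : pred^[m + 1] b = pred (pred^[m] b) := Function.iterate_succ_apply' pred m b
    have h1 : le (pred^[m + 1 + k] b) (pred^[m + 1] b) := by
      rw [Nat.add_comm (m + 1) k, Function.iterate_add_apply]
      exact iter_le hrefl htrans hple k _
    rw [heq, hs] at h1
    exact hpne _ (hb m) (hantisymm _ _ (hple _) h1)
  intro m n h
  by_contra hne
  rcases Nat.lt_or_ge m n with h' | h'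
  · exact key m n h' h.symm
  · exact key n m (lt_of_le_of_ne h' (fun hh => hne hh.symm)) h

theorem stab (hroot : pred ε = ε) {m n : ℕ} (h : m ≤ n) {x : A}
    (hx : pred^[m] x = ε) : pred^[n] x = ε := by
  have he : ∀ k, pred^[k] ε = ε := by
    intro k
    induction k with
    | zero => rfl
    | succ k ih => rw [Function.iterate_succ_apply', ih]; exact hroot
  obtain ⟨k, rfl⟩ := Nat.exists_eq_add_of_le h
  rw [Nat.add_comm, Function.iterate_add_apply, hx, he]

theorem height (hrefl : ∀ a, le a a) (hantisymm : ∀ a b, le a b → le b a → a = b)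
    (htrans : ∀ a b c, le a b → le b c → le a c)
    (hfin : ∀ b : A, {a : A | le a b}.Finite)
    (hple : ∀ a, le (pred a) a) (hpne : ∀ a, a ≠ ε → pred a ≠ a) :
    ∀ x : A, ∃ n, pred^[n] x = ε := by
  intro x
  by_contra h
  push_neg at h
  exact (Set.infinite_of_injective_forall_mem
    (s := {a : A | le a x}) (chain_inj hrefl hantisymm htrans hple hpne h)
    (fun n => iter_le hrefl htrans hple n x)) (hfin x)

end order

/-! ### Sentences -/

open FirstOrder.Language.Term

def sRefl : treeLang.Sentence := ∀' (leR.boundedFormula₂ &0 &0)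

def sTrans : treeLang.Sentence :=
  ∀' ∀' ∀' (leR.boundedFormula₂ &0 &1 ⟹ (leR.boundedFormula₂ &1 &2 ⟹ leR.boundedFormula₂ &0 &2))

def sAntisymm : treeLang.Sentence :=
  ∀' ∀' (leR.boundedFormula₂ &0 &1 ⟹ (leR.boundedFormula₂ &1 &0 ⟹ Term.bdEqual &0 &1))

def sPredLe : treeLang.Sentence := ∀' (leR.boundedFormula₂ (predF.apply₁ &0) &0)

def sPredNe : treeLang.Sentence :=
  ∀' (Term.bdEqual &0 (Constants.term epsF) ⊔ ∼(Term.bdEqual (predF.apply₁ &0) &0))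

def ct : (treeLang[[Unit]]).Term Empty := Constants.term (Language.con treeLang ())

def pt : ℕ → (treeLang[[Unit]]).Term Empty
  | 0 => ct
  | n + 1 => Functions.apply₁ (Sum.inl predF) (pt n)

def sigmas (n : ℕ) : (treeLang[[Unit]]).Sentence :=
  ∼(Term.equal (pt n) (Constants.term (Sum.inl epsF)))

theorem realize_pt {M : Type*} [(treeLang[[Unit]]).Structure M] (v : Empty → M) (n : ℕ) :
    (pt n).realize v
      = (fun a : M => Structure.funMap (L := treeLang[[Unit]]) (Sum.inl predF) ![a])^[n]
        (ct.realize v) := by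
  induction n with
  | zero => rfl
  | succ n ih =>
    rw [pt, Function.iterate_succ_apply', ← ih]
    exact Term.realize_functions_apply₁

end TreeAuxProof
namespace TreeAuxProof

section realizeA

variable {A : Type*} {ε : A} {pred : A → A} {meet : A → A → A} {le : A → A → Prop}

theorem relMap_le {x y : A} :
    @Structure.RelMap treeLang A (treeStructure A ε pred meet le) 2 leR ![x, y] ↔ le x y := Iff.rfl

theorem realize_sRefl (hrefl : ∀ a, le a a) :
    @Sentence.Realize treeLang A (treeStructure A ε pred meet le) sRefl := by
  letI : treeLang.Structure A := treeStructure A ε pred meet le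
  simp only [sRefl, Sentence.Realize, Formula.Realize, BoundedFormula.realize_all,
    BoundedFormula.realize_rel₂, Term.realize_var, Sum.elim_inr]
  intro a
  exact hrefl _

theorem realize_sTrans (htrans : ∀ a b c, le a b → le b c → le a c) :
    @Sentence.Realize treeLang A (treeStructure A ε pred meet le) sTrans := by
  letI : treeLang.Structure A := treeStructure A ε pred meet le
  simp only [sTrans, Sentence.Realize, Formula.Realize, BoundedFormula.realize_all,
    BoundedFormula.realize_imp, BoundedFormula.realize_rel₂, Term.realize_var, Sum.elim_inr]
  intro a b c h1 h2
  exact htrans _ _ _ h1 h2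

theorem realize_sAntisymm (hantisymm : ∀ a b, le a b → le b a → a = b) :
    @Sentence.Realize treeLang A (treeStructure A ε pred meet le) sAntisymm := by
  letI : treeLang.Structure A := treeStructure A ε pred meet le
  simp only [sAntisymm, Sentence.Realize, Formula.Realize, BoundedFormula.realize_all,
    BoundedFormula.realize_imp, BoundedFormula.realize_rel₂, BoundedFormula.realize_bdEqual,
    Term.realize_var, Sum.elim_inr]
  intro a b h1 h2
  exact hantisymm _ _ h1 h2

theorem realize_sPredLe (hple : ∀ a, le (pred a) a) :
    @Sentence.Realize treeLang A (treeStructure A ε pred meet le) sPredLe := by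
  letI : treeLang.Structure A := treeStructure A ε pred meet le
  simp only [sPredLe, Sentence.Realize, Formula.Realize, BoundedFormula.realize_all,
    BoundedFormula.realize_rel₂, Term.realize_var, Term.realize_functions_apply₁, Sum.elim_inr]
  intro a
  exact hple _

theorem realize_sPredNe (hpne : ∀ a, a ≠ ε → pred a ≠ a) :
    @Sentence.Realize treeLang A (treeStructure A ε pred meet le) sPredNe := by
  letI : treeLang.Structure A := treeStructure A ε pred meet le
  simp only [sPredNe, Sentence.Realize, Formula.Realize, BoundedFormula.realize_all,
    BoundedFormula.realize_sup, BoundedFormula.realize_not, BoundedFormula.realize_bdEqual,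
    Term.realize_var, Term.realize_functions_apply₁, Term.realize_constants, Sum.elim_inr]
  intro a
  by_cases h : a = ε
  · left; exact h
  · right; exact hpne _ h

end realizeA

end TreeAuxProof
namespace TreeAuxProof

theorem infinite_of_model (M : Type*) [Nonempty M] [(treeLang[[Unit]]).Structure M]
    (h0 : M ⊨ (treeLang.lhomWithConstants Unit).onSentence sRefl)
    (h1 : M ⊨ (treeLang.lhomWithConstants Unit).onSentence sTrans)
    (h2 : M ⊨ (treeLang.lhomWithConstants Unit).onSentence sAntisymm)
    (h3 : M ⊨ (treeLang.lhomWithConstants Unit).onSentence sPredLe)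
    (h4 : M ⊨ (treeLang.lhomWithConstants Unit).onSentence sPredNe)
    (h5 : ∀ n, M ⊨ sigmas n) : Infinite M := by
  letI : treeLang.Structure M := (treeLang.lhomWithConstants Unit).reduct M
  haveI := LHom.isExpansionOn_reduct (treeLang.lhomWithConstants Unit) M
  rw [LHom.realize_onSentence] at h0 h1 h2 h3 h4
  set leM : M → M → Prop :=
    fun x y => @Structure.RelMap treeLang M _ 2 leR ![x, y] with hleM
  set predM : M → M := fun x => @Structure.funMap treeLang M _ 1 predF ![x] with hpredM
  set epsM : M := @Structure.funMap treeLang M _ 0 epsF default with hepsM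
  have h0' : ∀ a, leM a a := by
    intro a
    have := h0
    simp only [sRefl, Sentence.Realize, Formula.Realize, BoundedFormula.realize_all,
      BoundedFormula.realize_rel₂, Term.realize_var, Sum.elim_inr] at this
    exact this a
  have h1' : ∀ a b c, leM a b → leM b c → leM a c := by
    intro a b c
    simp only [sTrans, Sentence.Realize, Formula.Realize, BoundedFormula.realize_all,
      BoundedFormula.realize_imp, BoundedFormula.realize_rel₂, Term.realize_var,
      Sum.elim_inr] at h1
    have := h1 a b c
    simpa [Fin.snoc, hleM] using this
  have h2' : ∀ a b, leM a b → leM b a → a = b := by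
    intro a b
    simp only [sAntisymm, Sentence.Realize, Formula.Realize, BoundedFormula.realize_all,
      BoundedFormula.realize_imp, BoundedFormula.realize_rel₂, BoundedFormula.realize_bdEqual,
      Term.realize_var, Sum.elim_inr] at h2
    have := h2 a b
    simpa [Fin.snoc, hleM] using this
  have h3' : ∀ a, leM (predM a) a := by
    intro a
    simp only [sPredLe, Sentence.Realize, Formula.Realize, BoundedFormula.realize_all,
      BoundedFormula.realize_rel₂, Term.realize_var, Term.realize_functions_apply₁,
      Sum.elim_inr] at h3
    exact h3 a
  have h4' : ∀ a, a ≠ epsM → predM a ≠ a := by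
    intro a ha
    simp only [sPredNe, Sentence.Realize, Formula.Realize, BoundedFormula.realize_all,
      BoundedFormula.realize_sup, BoundedFormula.realize_not, BoundedFormula.realize_bdEqual,
      Term.realize_var, Term.realize_functions_apply₁, Term.realize_constants, Sum.elim_inr] at h4
    rcases h4 a with h | h
    · exact absurd h ha
    · exact h
  set b : M := ct.realize (default : Empty → M) with hb
  have hd : ∀ n, (pt n).realize (default : Empty → M) = predM^[n] b := by
    intro n
    rw [realize_pt]
    rfl
  have h5' : ∀ n, predM^[n] b ≠ epsM := by
    intro n hn
    have := h5 n
    simp only [sigmas, Sentence.Realize, Formula.realize_not, Formula.realize_equal,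
      Term.realize_constants] at this
    apply this
    rw [hd n, hn]
    exact (Term.realize_constants (L := treeLang[[Unit]]) (M := M) (c := Sum.inl epsF)
      (v := (default : Empty → M))).symm
  exact Infinite.of_injective _ (chain_inj h0' h2' h1' h3' h4' h5')

end TreeAuxProof
namespace TreeAuxProof

universe w

instance countFunC : ∀ n, Countable ((treeLang[[Unit]]).Functions n)
  | 0 => inferInstanceAs (Countable (Unit ⊕ Unit))
  | 1 => inferInstanceAs (Countable (Unit ⊕ PEmpty))
  | 2 => inferInstanceAs (Countable (Unit ⊕ PEmpty))
  | (_ + 3) => inferInstanceAs (Countable (Empty ⊕ PEmpty))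

instance countRelC : ∀ n, Countable ((treeLang[[Unit]]).Relations n)
  | 0 => inferInstanceAs (Countable (Empty ⊕ Empty))
  | 1 => inferInstanceAs (Countable (Empty ⊕ Empty))
  | 2 => inferInstanceAs (Countable (Unit ⊕ Empty))
  | (_ + 3) => inferInstanceAs (Countable (Empty ⊕ Empty))

instance : Countable ((treeLang[[Unit]]).Symbols) := by
  unfold Language.Symbols
  infer_instance

theorem main_aux (A : Type w) [Countable A] (le : A → A → Prop) (ε : A)
    (pred : A → A) (meet : A → A → A)
    (hrefl : ∀ a, le a a)
    (hantisymm : ∀ a b, le a b → le b a → a = b)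
    (htrans : ∀ a b c, le a b → le b c → le a c)
    (hmin : ∀ a, le ε a)
    (hfin : ∀ b : A, {a : A | le a b}.Finite)
    (hpred : ∀ a : A, a ≠ ε → le (pred a) a ∧ pred a ≠ a ∧
      ∀ c, le c a → c ≠ a → le c (pred a))
    (hpredroot : pred ε = ε)
    (hcat : Cardinal.Categorical (ℵ₀ : Cardinal.{w})
      (@FirstOrder.Language.completeTheory treeLang A (treeStructure A ε pred meet le))) :
    ∃ n : ℕ, ∀ x : A, pred^[n] x = ε := by
  classical
  letI SA : treeLang.Structure A := treeStructure A ε pred meet le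
  haveI : Nonempty A := ⟨ε⟩
  have hple : ∀ a, le (pred a) a := by
    intro a
    by_cases h : a = ε
    · rw [h, hpredroot]; exact hrefl ε
    · exact (hpred a h).1
  have hpne : ∀ a, a ≠ ε → pred a ≠ a := fun a h => (hpred a h).2.1
  have ht : ∀ x : A, ∃ n, pred^[n] x = ε :=
    height hrefl hantisymm htrans hfin hple hpne
  rcases em (∃ n : ℕ, ∀ x : A, pred^[n] x = ε) with h | hbd
  · exact h
  exfalso
  push_neg at hbd
  have hInf : Infinite A := by
    by_contra h
    rw [not_infinite_iff_finite] at h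
    haveI : Fintype A := Fintype.ofFinite A
    obtain ⟨x, hx⟩ := hbd (Finset.univ.sup fun y : A => Nat.find (ht y))
    exact hx (stab hpredroot (Finset.le_sup (Finset.mem_univ x)) (Nat.find_spec (ht x)))
  set T : treeLang.Theory := @completeTheory treeLang A SA with hT
  set φ := treeLang.lhomWithConstants Unit with hφ
  set T' : (treeLang[[Unit]]).Theory := φ.onTheory T ∪ Set.range sigmas with hT'
  -- membership of the order sentences
  have mRefl : sRefl ∈ T := mem_completeTheory.2 (realize_sRefl hrefl)
  have mTrans : sTrans ∈ T := mem_completeTheory.2 (realize_sTrans htrans)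
  have mAntisymm : sAntisymm ∈ T := mem_completeTheory.2 (realize_sAntisymm hantisymm)
  have mPredLe : sPredLe ∈ T := mem_completeTheory.2 (realize_sPredLe hple)
  have mPredNe : sPredNe ∈ T := mem_completeTheory.2 (realize_sPredNe hpne)
  -- satisfiability of T'
  have hsat : T'.IsSatisfiable := by
    have hun : T' = ⋃ n : ℕ, (φ.onTheory T ∪ sigmas '' Set.Iic n) := by
      ext ψ
      simp only [hT', Set.mem_union, Set.mem_range, Set.mem_iUnion, Set.mem_image, Set.mem_Iic]
      constructor
      · rintro (h | ⟨n, rfl⟩)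
        · exact ⟨0, Or.inl h⟩
        · exact ⟨n, Or.inr ⟨n, le_rfl, rfl⟩⟩
      · rintro ⟨n, h | ⟨m, _, rfl⟩⟩
        · exact Or.inl h
        · exact Or.inr ⟨m, rfl⟩
    rw [hun, Theory.isSatisfiable_directed_union_iff]
    · intro n
      obtain ⟨x, hx⟩ := hbd n
      letI : (constantsOn Unit).Structure A := constantsOn.structure fun _ => x
      haveI : A ⊨ φ.onTheory T ∪ sigmas '' Set.Iic n := by
        rw [Theory.model_union_iff]
        constructor
        · rw [LHom.onTheory_model]
          infer_instance
        · rw [Theory.model_iff]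
          rintro ψ ⟨m, hm, rfl⟩
          have hne : pred^[m] x ≠ ε := fun hm' => hx (stab hpredroot hm hm')
          simp only [sigmas, Sentence.Realize, Formula.realize_not, Formula.realize_equal,
            Term.realize_constants]
          rw [realize_pt]
          intro hcontra
          apply hne
          have hc : ct.realize (default : Empty → A) = x := rfl
          have hp : ∀ a : A,
              Structure.funMap (L := treeLang[[Unit]]) (M := A) (Sum.inl predF) ![a]
                = pred a := fun a => withConstants_funMap_sumInl treeLang
          have hiter : ∀ k : ℕ, (fun a : A =>
              Structure.funMap (L := treeLang[[Unit]]) (Sum.inl predF) ![a])^[k]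
                (ct.realize (default : Empty → A)) = pred^[k] x := by
            intro k
            induction k with
            | zero => exact hc
            | succ k ih =>
              rw [Function.iterate_succ_apply', Function.iterate_succ_apply', ih, hp]
          rw [hiter] at hcontra
          rw [hcontra]
          have : ((Constants.term (Sum.inl epsF) : (treeLang[[Unit]]).Term Empty)).realize
              (default : Empty → A) = ε := by
            refine Term.realize_constants.trans ?_
            exact withConstants_funMap_sumInl treeLang
          exact this
      exact Theory.Model.isSatisfiable A
    · apply Monotone.directed_le
      intro m n hmn
      exact Set.union_subset_union_right _ (Set.image_mono (Set.Iic_subset_Iic.2 hmn))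
  -- an infinite model of T'
  set N0 := hsat.some with hN0
  have hmem : ∀ ψ ∈ T, φ.onSentence ψ ∈ T' := fun ψ h => Or.inl ⟨ψ, h, rfl⟩
  haveI : Infinite N0 :=
    infinite_of_model N0
      (Theory.realize_sentence_of_mem T' (hmem _ mRefl))
      (Theory.realize_sentence_of_mem T' (hmem _ mTrans))
      (Theory.realize_sentence_of_mem T' (hmem _ mAntisymm))
      (Theory.realize_sentence_of_mem T' (hmem _ mPredLe))
      (Theory.realize_sentence_of_mem T' (hmem _ mPredNe))
      (fun n => Theory.realize_sentence_of_mem T' (Or.inr ⟨n, rfl⟩))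
  have hcard : Cardinal.lift.{w} (treeLang[[Unit]]).card ≤ Cardinal.lift.{0} (ℵ₀ : Cardinal.{w}) := by
    calc Cardinal.lift.{w} (treeLang[[Unit]]).card
        ≤ Cardinal.lift.{w} (ℵ₀ : Cardinal.{0}) := Cardinal.lift_le.2 Cardinal.mk_le_aleph0
      _ = (ℵ₀ : Cardinal.{w}) := Cardinal.lift_aleph0
      _ = Cardinal.lift.{0} (ℵ₀ : Cardinal.{w}) := Cardinal.lift_aleph0.symm
  obtain ⟨N, hNcard⟩ := Theory.exists_model_card_eq ⟨N0, this⟩ (ℵ₀ : Cardinal.{w}) le_rfl hcard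
  letI SN : treeLang.Structure N := φ.reduct N
  haveI := LHom.isExpansionOn_reduct φ N
  haveI hNT : N ⊨ T := by
    have h1 : N ⊨ φ.onTheory T := (N.is_model).mono Set.subset_union_left
    exact (φ.onTheory_model T).1 h1
  -- categoricity
  set MA : T.ModelType := ⟨A⟩ with hMA
  set MN : T.ModelType := ⟨N⟩ with hMN
  obtain ⟨g⟩ := hcat MA MN (Cardinal.mk_eq_aleph0 A) hNcard
  set bN : N := ct.realize (default : Empty → N) with hbN
  set predN : N → N := fun x => @Structure.funMap treeLang N SN 1 predF ![x] with hpredN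
  have key : ∀ (y : A) (k : ℕ), (g (pred^[k] y) : N) = predN^[k] (g y) := by
    intro y k
    induction k with
    | zero => rfl
    | succ k ih =>
      rw [Function.iterate_succ_apply', Function.iterate_succ_apply', ← ih]
      have h1 : pred (pred^[k] y)
          = Structure.funMap (L := treeLang) (M := A) predF ![pred^[k] y] := rfl
      rw [h1, g.map_fun predF]
      rw [hpredN]
      congr 1
      funext i
      fin_cases i
      rfl
  obtain ⟨n, hn⟩ := ht (g.symm bN)
  have hsig : N ⊨ sigmas n := Theory.realize_sentence_of_mem T' (Or.inr ⟨n, rfl⟩)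
  simp only [sigmas, Sentence.Realize, Formula.realize_not, Formula.realize_equal,
    Term.realize_constants] at hsig
  apply hsig
  rw [realize_pt]
  have hpt : (fun a : N => Structure.funMap (L := treeLang[[Unit]]) (Sum.inl predF) ![a])
      = predN := rfl
  rw [hpt]
  have hgn := key (g.symm bN) n
  rw [hn, g.apply_symm_apply] at hgn
  rw [← hgn]
  have heps : (ε : A) = Structure.funMap (L := treeLang) (M := A) epsF default := rfl
  rw [heps, g.map_fun epsF]
  have hdef : ((g : A → N) ∘ (default : Fin 0 → A)) = (default : Fin 0 → N) :=
    Subsingleton.elim _ _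
  rw [hdef]
  exact (Term.realize_constants (L := treeLang[[Unit]]) (M := N) (c := Sum.inl epsF)
    (v := (default : Empty → N))).symm

end TreeAuxProof
namespace TreeAuxProof

universe u v

theorem transport_aux (A : Type u) [Countable A] (le : A → A → Prop) (ε : A)
    (pred : A → A) (meet : A → A → A)
    (hrefl : ∀ a, le a a)
    (hantisymm : ∀ a b, le a b → le b a → a = b)
    (htrans : ∀ a b c, le a b → le b c → le a c)
    (hmin : ∀ a, le ε a)
    (hfin : ∀ b : A, {a : A | le a b}.Finite)
    (hmeet : ∀ a b : A, le (meet a b) a ∧ le (meet a b) b ∧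
      ∀ c, le c a → le c b → le c (meet a b))
    (hpred : ∀ a : A, a ≠ ε → le (pred a) a ∧ pred a ≠ a ∧
      ∀ c, le c a → c ≠ a → le c (pred a))
    (hpredroot : pred ε = ε)
    (hcat : Cardinal.Categorical (ℵ₀ : Cardinal.{v})
      (@FirstOrder.Language.completeTheory treeLang A (treeStructure A ε pred meet le))) :
    ∃ n : ℕ, ∀ x : A, pred^[n] x = ε := by
  classical
  letI SA : treeLang.Structure A := treeStructure A ε pred meet le
  haveI : Nonempty A := ⟨ε⟩
  have hple : ∀ a, le (pred a) a := by
    intro a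
    by_cases h : a = ε
    · rw [h, hpredroot]; exact hrefl ε
    · exact (hpred a h).1
  have hpne : ∀ a, a ≠ ε → pred a ≠ a := fun a h => (hpred a h).2.1
  have ht : ∀ x : A, ∃ n, pred^[n] x = ε :=
    height hrefl hantisymm htrans hfin hple hpne
  rcases finite_or_infinite A with hfA | hIA
  · haveI : Fintype A := Fintype.ofFinite A
    refine ⟨Finset.univ.sup fun y : A => Nat.find (ht y), fun x => ?_⟩
    exact stab hpredroot (Finset.le_sup (Finset.mem_univ x)) (Nat.find_spec (ht x))
  -- transport to universe v
  obtain ⟨e⟩ : Nonempty (A ≃ ULift.{v} ℕ) := by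
    rw [← Cardinal.lift_mk_eq']
    simp [Cardinal.mk_eq_aleph0]
  set B := ULift.{v} ℕ with hB
  set le' : B → B → Prop := fun x y => le (e.symm x) (e.symm y) with hle'
  set ε' : B := e ε with hε'
  set pred' : B → B := fun x => e (pred (e.symm x)) with hpred'
  set meet' : B → B → B := fun x y => e (meet (e.symm x) (e.symm y)) with hmeet'
  letI SB : treeLang.Structure B := treeStructure B ε' pred' meet' le'
  -- first-order equivalence
  set G : @FirstOrder.Language.Equiv treeLang A B SA SB :=
    { toEquiv := e
      map_fun' := by
        intro n f x
        match n, f with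
        | 0, f => rfl
        | 1, f =>
          show e (pred (x 0)) = e (pred (e.symm (e (x 0))))
          rw [e.symm_apply_apply]
        | 2, f =>
          show e (meet (x 0) (x 1)) = e (meet (e.symm (e (x 0))) (e.symm (e (x 1))))
          rw [e.symm_apply_apply, e.symm_apply_apply]
        | n + 3, f => exact f.elim
      map_rel' := by
        intro n r x
        match n, r with
        | 2, r =>
          show le (e.symm (e (x 0))) (e.symm (e (x 1))) ↔ le (x 0) (x 1)
          rw [e.symm_apply_apply, e.symm_apply_apply]
        | 0, r => exact r.elim
        | 1, r => exact r.elim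
        | n + 3, r => exact r.elim } with hG
  have hThEq : (@completeTheory treeLang B SB) = (@completeTheory treeLang A SA) :=
    Set.ext fun ψ => by
      rw [mem_completeTheory, mem_completeTheory]
      exact (StrongHomClass.realize_sentence G ψ).symm
  have hcat' : Cardinal.Categorical (ℵ₀ : Cardinal.{v}) (@completeTheory treeLang B SB) := by
    rw [hThEq]; exact hcat
  obtain ⟨n, hn⟩ := main_aux B le' ε' pred' meet'
    (fun a => hrefl _)
    (fun a b h1 h2 => by
      have := hantisymm _ _ h1 h2
      exact e.symm.injective this)
    (fun a b c h1 h2 => htrans _ _ _ h1 h2)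
    (fun a => by
      show le (e.symm (e ε)) (e.symm a)
      rw [e.symm_apply_apply]; exact hmin _)
    (fun b => by
      have : {x : B | le' x b} = e '' {a : A | le a (e.symm b)} := by
        ext x
        simp only [Set.mem_setOf_eq, Set.mem_image, hle']
        constructor
        · intro h; exact ⟨e.symm x, h, e.apply_symm_apply x⟩
        · rintro ⟨a, ha, rfl⟩; rwa [e.symm_apply_apply]
      rw [this]
      exact (hfin _).image e)
    (fun a ha => by
      have ha' : e.symm a ≠ ε := fun h => ha (by rw [hε', ← h, e.apply_symm_apply])
      obtain ⟨h1, h2, h3⟩ := hpred (e.symm a) ha'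
      refine ⟨?_, ?_, ?_⟩
      · show le (e.symm (e (pred (e.symm a)))) (e.symm a)
        rwa [e.symm_apply_apply]
      · intro h
        apply h2
        have := congrArg e.symm h
        rwa [e.symm_apply_apply] at this
      · intro c hc hca
        show le (e.symm c) (e.symm (e (pred (e.symm a))))
        rw [e.symm_apply_apply]
        exact h3 _ hc fun h => hca (e.symm.injective h))
    (by show e (pred (e.symm (e ε))) = e ε; rw [e.symm_apply_apply, hpredroot])
    hcat'
  refine ⟨n, fun x => ?_⟩
  have hx := hn (e x)
  have hiter : ∀ (k : ℕ) (y : A), pred'^[k] (e y) = e (pred^[k] y) := by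
    intro k
    induction k with
    | zero => intro y; rfl
    | succ k ih =>
      intro y
      rw [Function.iterate_succ_apply', Function.iterate_succ_apply', ih]
      show e (pred (e.symm (e (pred^[k] y)))) = _
      rw [e.symm_apply_apply]
  rw [hiter] at hx
  exact e.injective hx

end TreeAuxProof
/-- Every countable `ℵ₀`-categorical tree (an `L_t`-structure where `≤` is a
partial order with finite downsets, `ε` is the minimum, `⊓` is the meet and
`pred` the immediate predecessor) has finite height: there is `n` with
`pred^[n] x = ε` for all `x`. -/
theorem aleph0_categorical_tree_finite_height
    (A : Type*) [Countable A] (le : A → A → Prop) (ε : A)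
    (pred : A → A) (meet : A → A → A)
    (hrefl : ∀ a, le a a)
    (hantisymm : ∀ a b, le a b → le b a → a = b)
    (htrans : ∀ a b c, le a b → le b c → le a c)
    (hmin : ∀ a, le ε a)
    (hfin : ∀ b : A, {a : A | le a b}.Finite)
    (hmeet : ∀ a b : A, le (meet a b) a ∧ le (meet a b) b ∧
      ∀ c, le c a → le c b → le c (meet a b))
    (hpred : ∀ a : A, a ≠ ε → le (pred a) a ∧ pred a ≠ a ∧
      ∀ c, le c a → c ≠ a → le c (pred a))
    (hpredroot : pred ε = ε)
    (hcat : Cardinal.Categorical ℵ₀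
      (@FirstOrder.Language.completeTheory treeLang A (treeStructure A ε pred meet le))) :
    ∃ n : ℕ, ∀ x : A, pred^[n] x = ε := by

  exact TreeAuxProof.transport_aux A le ε pred meet hrefl hantisymm htrans hmin hfin hmeet
    hpred hpredroot hcat
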